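/- For parameters 0 < β < 1 and t₀ > 0, the RQ distribution in s-space is normalized: ∫_{-∞}^{∞} f_RQ(s) ds = 1. -/

import Mathlib

open MeasureTheory Real Filter Topology Set

lemma tanh_aux (x : ℝ) : Real.sinh x / Real.cosh x = 1 - 2 / (Real.exp (2*x) + 1) := by
  have h2 : Real.exp (2*x) = Real.exp x * Real.exp x := by rw [two_mul, Real.exp_add]
  have h1 : Real.exp (2*x) + 1 ≠ 0 := by positivity
  have h3 : Real.cosh x ≠ 0 := (Real.cosh_pos x).ne'
  have h4 : Real.exp x ≠ 0 := (Real.exp_pos x).ne'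
  rw [Real.sinh_eq, Real.cosh_eq, Real.exp_neg]
  have h5 : Real.exp x + (Real.exp x)⁻¹ ≠ 0 := by positivity
  field_simp
  nlinarith [h2, Real.exp_pos x]

lemma tendsto_tanh_atTop' : Tendsto (fun x => Real.sinh x / Real.cosh x) atTop (𝓝 1) := by
  have h : Tendsto (fun x : ℝ => Real.exp (2*x) + 1) atTop atTop :=
    (Real.tendsto_exp_atTop.comp (tendsto_id.const_mul_atTop two_pos)).atTop_add tendsto_const_nhds
  have := h.const_div_atTop 2
  simp only [tanh_aux]
  simpa using (tendsto_const_nhds (x := (1:ℝ))).sub this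

lemma tendsto_tanh_atBot' : Tendsto (fun x => Real.sinh x / Real.cosh x) atBot (𝓝 (-1)) := by
  have := (tendsto_tanh_atTop'.comp tendsto_neg_atBot_atTop).neg
  simp only [Function.comp, Real.sinh_neg, Real.cosh_neg, neg_div, neg_neg] at this
  simpa using this


/-- The Cole–Cole (RQ) distribution of relaxation times in the variable `s = ln t`. -/
noncomputable def fRQ (β t₀ : ℝ) (s : ℝ) : ℝ :=
  Real.sin (β * π) / (2 * π * (Real.cosh (β * (s - Real.log t₀)) + Real.cos (β * π)))

/-- **Normalization of the RQ distribution in `s`-space.**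
For `0 < β < 1` and `t₀ > 0`, `∫_{-∞}^{∞} f_RQ(s) ds = 1`. -/
theorem fRQ_normalized (β t₀ : ℝ) (hβ₀ : 0 < β) (hβ₁ : β < 1) (ht₀ : 0 < t₀) :
    ∫ s : ℝ, fRQ β t₀ s = 1 := by
  have hπ : (0:ℝ) < π := Real.pi_pos
  set L := Real.log t₀ with hL
  have hh0 : 0 < β * π / 2 := by positivity
  have hh1 : β * π / 2 < π / 2 := by nlinarith
  have hc1 : 0 < Real.cos (β * π / 2) :=
    Real.cos_pos_of_mem_Ioo ⟨by linarith, hh1⟩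
  have hs1 : 0 < Real.sin (β * π / 2) :=
    Real.sin_pos_of_pos_of_lt_pi hh0 (by linarith)
  have hcosa : Real.cos (β * π) = 2 * Real.cos (β * π / 2) ^ 2 - 1 := by
    rw [show β * π = 2 * (β * π / 2) by ring, Real.cos_two_mul]
    norm_num
  have hsina : Real.sin (β * π) = 2 * Real.sin (β * π / 2) * Real.cos (β * π / 2) := by
    rw [show β * π = 2 * (β * π / 2) by ring, Real.sin_two_mul]
    norm_num
  have hcosa_gt : -1 < Real.cos (β * π) := by rw [hcosa]; nlinarith
  -- the antiderivative
  set F : ℝ → ℝ := fun s => (β * π)⁻¹ *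
    Real.arctan (Real.sinh (β/2 * (s - L)) / Real.cosh (β/2 * (s - L)) * Real.tan (β * π / 2))
    with hF
  have hderiv : ∀ s, HasDerivAt F (fRQ β t₀ s) s := by
    intro s
    set g := β/2 * (s - L) with hg
    have hgd : HasDerivAt (fun s : ℝ => β/2 * (s - L)) (β/2) s := by
      simpa using ((hasDerivAt_id s).sub_const L).const_mul (β/2)
    have hS : HasDerivAt (fun s : ℝ => Real.sinh (β/2 * (s - L))) (Real.cosh g * (β/2)) s :=
      by have := (Real.hasDerivAt_sinh g).comp s hgd; exact this
    have hC : HasDerivAt (fun s : ℝ => Real.cosh (β/2 * (s - L))) (Real.sinh g * (β/2)) s :=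
      by have := (Real.hasDerivAt_cosh g).comp s hgd; exact this
    have hCpos : 0 < Real.cosh g := Real.cosh_pos g
    have hT := hS.div hC hCpos.ne'
    have hTk := hT.mul_const (Real.tan (β * π / 2))
    have hA := (Real.hasDerivAt_arctan
      (Real.sinh g / Real.cosh g * Real.tan (β * π / 2))).comp s hTk
    have hfinal := hA.const_mul (β * π)⁻¹
    refine hfinal.congr_deriv ?_
    symm
    -- the value identity
    set C := Real.cosh g with hCdef
    set S := Real.sinh g with hSdef
    set c1 := Real.cos (β * π / 2)
    set s1 := Real.sin (β * π / 2)
    have hpy : s1 ^ 2 + c1 ^ 2 = 1 := Real.sin_sq_add_cos_sq _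
    have hsc : S ^ 2 = C ^ 2 - 1 := Real.sinh_sq g
    have hcosh2 : Real.cosh (β * (s - L)) = C ^ 2 + S ^ 2 := by
      rw [show β * (s - L) = 2 * (β/2 * (s - L)) by ring, Real.cosh_two_mul]
    have htan : Real.tan (β * π / 2) = s1 / c1 := Real.tan_eq_sin_div_cos _
    have hC1 : 1 ≤ C := Real.one_le_cosh g
    have hs1lt : s1 < 1 := by
      nlinarith [hpy, hc1, hs1]
    have hden : 0 < C ^ 2 - s1 ^ 2 := by nlinarith
    rw [fRQ, hsina, hcosa, hcosh2, htan]
    clear_value C S c1 s1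
    have hC0 : C ≠ 0 := hCpos.ne'
    have hc0 : c1 ≠ 0 := hc1.ne'
    have e2 : C ^ 2 + S ^ 2 + (2 * c1 ^ 2 - 1) = 2 * (C ^ 2 - s1 ^ 2) := by
      linear_combination hsc + 2 * hpy
    have e1 : 1 + (S / C * (s1 / c1)) ^ 2 = (C ^ 2 - s1 ^ 2) / (C ^ 2 * c1 ^ 2) := by
      field_simp
      linear_combination s1^2 * hsc + C^2 * hpy
    have hcs : C ^ 2 - S ^ 2 = 1 := by
      rw [hCdef, hSdef]; exact Real.cosh_sq_sub_sinh_sq g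
    have hnum : C * (β / 2) * C - S * (S * (β / 2)) = β / 2 := by
      linear_combination (β / 2) * hcs
    rw [e2, e1, hnum]
    rw [one_div_div]
    field_simp
  -- limits of F at ±∞
  have harg_top : Tendsto (fun s : ℝ => β/2 * (s - L)) atTop atTop := by
    apply Filter.Tendsto.const_mul_atTop (by positivity : (0:ℝ) < β/2)
    simpa [sub_eq_add_neg] using tendsto_atTop_add_const_right atTop (-L) tendsto_id
  have harg_bot : Tendsto (fun s : ℝ => β/2 * (s - L)) atBot atBot := by
    apply Filter.Tendsto.const_mul_atBot (by positivity : (0:ℝ) < β/2)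
    simpa [sub_eq_add_neg] using tendsto_atBot_add_const_right atBot (-L) tendsto_id
  have harctan : Real.arctan (Real.tan (β * π / 2)) = β * π / 2 :=
    Real.arctan_tan (by linarith) hh1
  have htop : Tendsto F atTop (𝓝 ((β * π)⁻¹ * (β * π / 2))) := by
    have h1 := (tendsto_tanh_atTop'.comp harg_top).mul_const (Real.tan (β * π / 2))
    have h2 := (Real.continuous_arctan.tendsto _).comp h1
    have h3 := h2.const_mul (β * π)⁻¹
    rw [hF]
    simpa [Function.comp, one_mul, harctan] using h3
  have hbot : Tendsto F atBot (𝓝 ((β * π)⁻¹ * (-(β * π / 2)))) := by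
    have h1 := (tendsto_tanh_atBot'.comp harg_bot).mul_const (Real.tan (β * π / 2))
    have h2 := (Real.continuous_arctan.tendsto _).comp h1
    have h3 := h2.const_mul (β * π)⁻¹
    rw [hF]
    simpa [Function.comp, Real.arctan_neg, harctan] using h3
  -- integrability
  have hnonneg : ∀ s, 0 ≤ fRQ β t₀ s := by
    intro s
    have hden : 0 < Real.cosh (β * (s - L)) + Real.cos (β * π) := by
      have := Real.one_le_cosh (β * (s - L)); linarith
    have hsin : 0 < Real.sin (β * π) := by rw [hsina]; positivity
    exact le_of_lt (by rw [fRQ]; positivity)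
  have hsymm : ∀ s : ℝ, fRQ β t₀ (2 * L - s) = fRQ β t₀ s := by
    intro s
    rw [fRQ, fRQ, show β * (2 * L - s - L) = -(β * (s - L)) by ring, Real.cosh_neg]
  have hIoi : IntegrableOn (fun s => fRQ β t₀ s) (Ioi L) := by
    refine integrableOn_Ioi_deriv_of_nonneg' (fun x _ => hderiv x)
      (fun x _ => hnonneg x) htop
  have hIci : IntegrableOn (fun s => fRQ β t₀ s) (Ici L) :=
    Iff.mpr integrableOn_Ici_iff_integrableOn_Ioi hIoi
  have hInd : Integrable ((Ici L).indicator (fun s => fRQ β t₀ s)) :=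
    (integrable_indicator_iff measurableSet_Ici).mpr hIci
  have hInd2 : Integrable (fun x : ℝ => (Ici L).indicator (fun s => fRQ β t₀ s) (2 * L - x)) :=
    hInd.comp_sub_left (2 * L)
  have heq : (fun x : ℝ => (Ici L).indicator (fun s => fRQ β t₀ s) (2 * L - x))
      = (Iic L).indicator (fun s => fRQ β t₀ s) := by
    funext x
    by_cases hx : x ≤ L
    · rw [Set.indicator_of_mem (by simp only [Set.mem_Ici]; linarith : (2*L - x) ∈ Ici L),
        Set.indicator_of_mem (by simpa using hx : x ∈ Iic L), hsymm]
    · rw [Set.indicator_of_notMem (by simp; linarith : (2*L - x) ∉ Ici L),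
        Set.indicator_of_notMem (by simpa using hx : x ∉ Iic L)]
  have hIic : IntegrableOn (fun s => fRQ β t₀ s) (Iic L) :=
    (integrable_indicator_iff measurableSet_Iic).mp (heq ▸ hInd2)
  have hint : Integrable (fun s => fRQ β t₀ s) := by
    rw [← integrableOn_univ, ← Set.Iic_union_Ioi (a := L)]
    exact hIic.union hIoi
  -- conclude
  rw [MeasureTheory.integral_of_hasDerivAt_of_tendsto hderiv hint hbot htop]
  field_simp
  norm_num
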